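/- arXiv:1801.00781 — 6 statements merged into one kernel-verified Lean document; each statement's English description precedes it below -/
import Mathlib

section
/- Let a,b,c > 0 with b^4 < 1, and define f(x) = (c^4 + 3a^2b^2 x + 3a^4b^4 x^2 + a^6b^6c^4 x^3) / (b^6c^4 + 3a^2b^4 x + 3a^4b^2 x^2 + a^6c^4 x^3). Then f is strictly decreasing on [0,∞). -/
/-- If `b^4 < 1`, the Gibbs recursion function `f` is strictly decreasing on `[0, ∞)`. -/
theorem f_strictAntiOn (a b c : ℝ) (ha : 0 < a) (hb : 0 < b) (hc : 0 < c)
    (hb4 : b^4 < 1) :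
    StrictAntiOn (fun x : ℝ =>
      (c^4 + 3*a^2*b^2*x + 3*a^4*b^4*x^2 + a^6*b^6*c^4*x^3) /
        (b^6*c^4 + 3*a^2*b^4*x + 3*a^4*b^2*x^2 + a^6*c^4*x^3))
      (Set.Ici (0:ℝ)) := by
  intro x hx y hy hxy
  simp only [Set.mem_Ici] at hx hy
  have hb4p : (0:ℝ) < b^4 := by positivity
  have h4 : (0:ℝ) < 1 - b^4 := by linarith
  have h8 : (0:ℝ) < 1 - b^8 := by nlinarith
  have h12 : (0:ℝ) < 1 - b^12 := by nlinarith
  have hd : 0 < y - x := by linarith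
  have hDx : 0 < b^6*c^4 + 3*a^2*b^4*x + 3*a^4*b^2*x^2 + a^6*c^4*x^3 := by positivity
  have hDy : 0 < b^6*c^4 + 3*a^2*b^4*y + 3*a^4*b^2*y^2 + a^6*c^4*y^3 := by positivity
  simp only
  rw [div_lt_div_iff₀ hDy hDx]
  have key :
      (c^4 + 3*a^2*b^2*x + 3*a^4*b^4*x^2 + a^6*b^6*c^4*x^3) *
        (b^6*c^4 + 3*a^2*b^4*y + 3*a^4*b^2*y^2 + a^6*c^4*y^3)
      - (c^4 + 3*a^2*b^2*y + 3*a^4*b^4*y^2 + a^6*b^6*c^4*y^3) *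
        (b^6*c^4 + 3*a^2*b^4*x + 3*a^4*b^2*x^2 + a^6*c^4*x^3)
      = 3*a^2*b^4*c^4*(1-b^4)*(y-x)
        + 3*a^4*b^2*c^4*(1-b^8)*(y-x)*(y+x)
        + a^6*c^8*(1-b^12)*(y-x)*(y^2+x*y+x^2)
        + 9*a^6*b^4*(1-b^4)*x*y*(y-x)
        + 3*a^8*b^2*c^4*(1-b^8)*x*y*(y-x)*(y+x)
        + 3*a^10*b^4*c^4*(1-b^4)*x^2*y^2*(y-x) := by ring
  have t1 : 0 < 3*a^2*b^4*c^4*(1-b^4)*(y-x) := by positivity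
  have t2 : 0 ≤ 3*a^4*b^2*c^4*(1-b^8)*(y-x)*(y+x) := by positivity
  have t3 : 0 ≤ a^6*c^8*(1-b^12)*(y-x)*(y^2+x*y+x^2) := by positivity
  have t4 : 0 ≤ 9*a^6*b^4*(1-b^4)*x*y*(y-x) := by positivity
  have t5 : 0 ≤ 3*a^8*b^2*c^4*(1-b^8)*x*y*(y-x)*(y+x) := by positivity
  have t6 : 0 ≤ 3*a^10*b^4*c^4*(1-b^4)*x^2*y^2*(y-x) := by positivity
  linarith [key]
end

section
/- Let a,b,c > 0 with b^4 < 1, and define f(x) = (c^4 + 3a^2b^2 x + 3a^4b^4 x^2 + a^6b^6c^4 x^3) / (b^6c^4 + 3a^2b^4 x + 3a^4b^2 x^2 + a^6c^4 x^3). Then f has exactly one fixed point in (0,∞). -/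
set_option maxHeartbeats 1000000 in
/-- If `b^4 < 1`, the Gibbs recursion function `f` has exactly one fixed point in `(0, ∞)`. -/
theorem f_unique_positive_fixed_point (a b c : ℝ) (ha : 0 < a) (hb : 0 < b) (hc : 0 < c)
    (hb4 : b^4 < 1) :
    ∃! x : ℝ, 0 < x ∧
      (c^4 + 3*a^2*b^2*x + 3*a^4*b^4*x^2 + a^6*b^6*c^4*x^3) /
        (b^6*c^4 + 3*a^2*b^4*x + 3*a^4*b^2*x^2 + a^6*c^4*x^3) = x := by
  have hDpos : ∀ t : ℝ, 0 ≤ t →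
      0 < b^6*c^4 + 3*a^2*b^4*t + 3*a^4*b^2*t^2 + a^6*c^4*t^3 := by
    intro t ht
    have h1 : 0 < b^6*c^4 := by positivity
    nlinarith [mul_nonneg (mul_nonneg (pow_pos ha 2).le (pow_pos hb 4).le) ht,
      mul_nonneg (mul_nonneg (pow_pos ha 4).le (pow_pos hb 2).le) (sq_nonneg t),
      mul_nonneg (mul_nonneg (pow_pos ha 6).le (pow_pos hc 4).le)
        (mul_nonneg (mul_nonneg ht ht) ht)]
  have h8 : b^8 < 1 := by nlinarith [pow_pos hb 4]
  have h12 : b^12 < 1 := by nlinarith [pow_pos hb 4, pow_pos hb 8]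
  -- choose M large enough
  set K : ℝ := c^4 + 3*a^2*b^2 + 3*a^4*b^4 + a^6*b^6*c^4 with hK
  have hKpos : 0 < K := by positivity
  obtain ⟨M, hM1, hMK⟩ : ∃ M : ℝ, 1 ≤ M ∧ K < a^6*c^4 * M := by
    refine ⟨max 1 (K / (a^6*c^4) + 1), le_max_left _ _, ?_⟩
    have h2 : 0 < a^6*c^4 := by positivity
    have h1 : K / (a^6*c^4) + 1 ≤ max 1 (K / (a^6*c^4) + 1) := le_max_right _ _
    have h3 : K / (a^6*c^4) < max 1 (K / (a^6*c^4) + 1) := by linarith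
    have := (div_lt_iff₀ h2).mp h3
    linarith
  have hM0 : (0:ℝ) ≤ M := by linarith
  have hgcont : ContinuousOn
      (fun t : ℝ => t * (b^6*c^4 + 3*a^2*b^4*t + 3*a^4*b^2*t^2 + a^6*c^4*t^3)
        - (c^4 + 3*a^2*b^2*t + 3*a^4*b^4*t^2 + a^6*b^6*c^4*t^3)) (Set.Icc 0 M) := by
    fun_prop
  have hg0 : (0:ℝ) * (b^6*c^4 + 3*a^2*b^4*0 + 3*a^4*b^2*0^2 + a^6*c^4*0^3)
      - (c^4 + 3*a^2*b^2*0 + 3*a^4*b^4*0^2 + a^6*b^6*c^4*0^3) = -c^4 := by ring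
  have hgM : 0 < M * (b^6*c^4 + 3*a^2*b^4*M + 3*a^4*b^2*M^2 + a^6*c^4*M^3)
      - (c^4 + 3*a^2*b^2*M + 3*a^4*b^4*M^2 + a^6*b^6*c^4*M^3) := by
    have hM3 : (1:ℝ) ≤ M^3 := one_le_pow₀ hM1
    have hMM3 : M ≤ M^3 := by
      nlinarith [mul_nonneg (mul_nonneg hM0 (by linarith : (0:ℝ) ≤ M - 1))
        (by linarith : (0:ℝ) ≤ M + 1)]
    have hM2M3 : M^2 ≤ M^3 := by
      nlinarith [mul_nonneg (sq_nonneg M) (by linarith : (0:ℝ) ≤ M - 1)]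
    have hNle : c^4 + 3*a^2*b^2*M + 3*a^4*b^4*M^2 + a^6*b^6*c^4*M^3 ≤ K * M^3 := by
      rw [hK]
      nlinarith [mul_nonneg (pow_pos hc 4).le (sub_nonneg.mpr hM3),
        mul_nonneg (mul_nonneg (mul_nonneg (by norm_num : (0:ℝ) ≤ 3) (pow_pos ha 2).le)
          (pow_pos hb 2).le) (sub_nonneg.mpr hMM3),
        mul_nonneg (mul_nonneg (mul_nonneg (by norm_num : (0:ℝ) ≤ 3) (pow_pos ha 4).le)
          (pow_pos hb 4).le) (sub_nonneg.mpr hM2M3)]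
    have hDge : a^6*c^4 * M^3 ≤ b^6*c^4 + 3*a^2*b^4*M + 3*a^4*b^2*M^2 + a^6*c^4*M^3 := by
      nlinarith [mul_pos (pow_pos hb 6) (pow_pos hc 4),
        mul_nonneg (mul_nonneg (pow_pos ha 2).le (pow_pos hb 4).le) hM0,
        mul_nonneg (mul_nonneg (pow_pos ha 4).le (pow_pos hb 2).le) (sq_nonneg M)]
    have hKM : K * M^3 < (a^6*c^4*M) * M^3 := by
      have h3 : (0:ℝ) < M^3 := by linarith
      exact mul_lt_mul_of_pos_right hMK h3
    have hMD : M * (a^6*c^4 * M^3) ≤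
        M * (b^6*c^4 + 3*a^2*b^4*M + 3*a^4*b^2*M^2 + a^6*c^4*M^3) :=
      mul_le_mul_of_nonneg_left hDge hM0
    nlinarith
  have hmem : (0:ℝ) ∈ Set.Icc
      ((0:ℝ) * (b^6*c^4 + 3*a^2*b^4*0 + 3*a^4*b^2*0^2 + a^6*c^4*0^3)
        - (c^4 + 3*a^2*b^2*0 + 3*a^4*b^4*0^2 + a^6*b^6*c^4*0^3))
      (M * (b^6*c^4 + 3*a^2*b^4*M + 3*a^4*b^2*M^2 + a^6*c^4*M^3)
        - (c^4 + 3*a^2*b^2*M + 3*a^4*b^4*M^2 + a^6*b^6*c^4*M^3)) := by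
    constructor
    · rw [hg0]; nlinarith [pow_pos hc 4]
    · exact hgM.le
  obtain ⟨x, hxIcc, hgx⟩ := intermediate_value_Icc hM0 hgcont hmem
  simp only [] at hgx
  have hxD : 0 < b^6*c^4 + 3*a^2*b^4*x + 3*a^4*b^2*x^2 + a^6*c^4*x^3 := hDpos x hxIcc.1
  have hxpos : 0 < x := by
    rcases lt_or_eq_of_le hxIcc.1 with h | h
    · exact h
    · exfalso
      rw [← h] at hgx
      nlinarith [pow_pos hc 4]
  have hxeq : (c^4 + 3*a^2*b^2*x + 3*a^4*b^4*x^2 + a^6*b^6*c^4*x^3) /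
      (b^6*c^4 + 3*a^2*b^4*x + 3*a^4*b^2*x^2 + a^6*c^4*x^3) = x := by
    rw [div_eq_iff hxD.ne']
    linarith
  refine ⟨x, ⟨hxpos, hxeq⟩, ?_⟩
  rintro y ⟨hypos, hyeq⟩
  have hyD : 0 < b^6*c^4 + 3*a^2*b^4*y + 3*a^4*b^2*y^2 + a^6*c^4*y^3 := hDpos y hypos.le
  have hx' : (c^4 + 3*a^2*b^2*x + 3*a^4*b^4*x^2 + a^6*b^6*c^4*x^3)
      - x * (b^6*c^4 + 3*a^2*b^4*x + 3*a^4*b^2*x^2 + a^6*c^4*x^3) = 0 := by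
    have := (div_eq_iff hxD.ne').mp hxeq
    linarith
  have hy' : (c^4 + 3*a^2*b^2*y + 3*a^4*b^4*y^2 + a^6*b^6*c^4*y^3)
      - y * (b^6*c^4 + 3*a^2*b^4*y + 3*a^4*b^2*y^2 + a^6*c^4*y^3) = 0 := by
    have := (div_eq_iff hyD.ne').mp hyeq
    linarith
  have key : (y - x) *
      (3*a^2*b^4*c^4*(1-b^4) + 3*a^4*b^2*c^4*(1-b^8)*(x+y)
        + a^6*c^8*(1-b^12)*(x^2+x*y+y^2) + 9*a^6*b^4*(1-b^4)*(x*y)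
        + 3*a^8*b^2*c^4*(1-b^8)*(x^2*y+x*y^2) + 3*a^10*b^4*c^4*(1-b^4)*(x^2*y^2)
        + (b^6*c^4 + 3*a^2*b^4*x + 3*a^4*b^2*x^2 + a^6*c^4*x^3)
          * (b^6*c^4 + 3*a^2*b^4*y + 3*a^4*b^2*y^2 + a^6*c^4*y^3)) = 0 := by
    linear_combination (b^6*c^4 + 3*a^2*b^4*y + 3*a^4*b^2*y^2 + a^6*c^4*y^3) * hx'
      - (b^6*c^4 + 3*a^2*b^4*x + 3*a^4*b^2*x^2 + a^6*c^4*x^3) * hy'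
  have hQpos : 0 < 3*a^2*b^4*c^4*(1-b^4) + 3*a^4*b^2*c^4*(1-b^8)*(x+y)
        + a^6*c^8*(1-b^12)*(x^2+x*y+y^2) + 9*a^6*b^4*(1-b^4)*(x*y)
        + 3*a^8*b^2*c^4*(1-b^8)*(x^2*y+x*y^2) + 3*a^10*b^4*c^4*(1-b^4)*(x^2*y^2)
        + (b^6*c^4 + 3*a^2*b^4*x + 3*a^4*b^2*x^2 + a^6*c^4*x^3)
          * (b^6*c^4 + 3*a^2*b^4*y + 3*a^4*b^2*y^2 + a^6*c^4*y^3) := by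
    have h4 : 0 < 1 - b^4 := by linarith
    have h8' : 0 < 1 - b^8 := by linarith
    have h12' : 0 < 1 - b^12 := by linarith
    have t1 : 0 < 3*a^2*b^4*c^4*(1-b^4) := by positivity
    have t2 : 0 < 3*a^4*b^2*c^4*(1-b^8)*(x+y) := by
      have : 0 < x + y := by linarith
      positivity
    have t3 : 0 < a^6*c^8*(1-b^12)*(x^2+x*y+y^2) := by
      have : 0 < x^2+x*y+y^2 := by positivity
      positivity
    have t4 : 0 < 9*a^6*b^4*(1-b^4)*(x*y) := by
      have : 0 < x*y := mul_pos hxpos hypos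
      positivity
    have t5 : 0 < 3*a^8*b^2*c^4*(1-b^8)*(x^2*y+x*y^2) := by
      have : 0 < x^2*y+x*y^2 := by positivity
      positivity
    have t6 : 0 < 3*a^10*b^4*c^4*(1-b^4)*(x^2*y^2) := by
      have : 0 < x^2*y^2 := by positivity
      positivity
    have t7 : 0 < (b^6*c^4 + 3*a^2*b^4*x + 3*a^4*b^2*x^2 + a^6*c^4*x^3)
          * (b^6*c^4 + 3*a^2*b^4*y + 3*a^4*b^2*y^2 + a^6*c^4*y^3) := mul_pos hxD hyD
    linarith
  rcases mul_eq_zero.mp key with h | h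
  · linarith
  · exact absurd h hQpos.ne'
end

section
/- Let a,b,c > 0 and define f(x) = (c^4 + 3a^2b^2 x + 3a^4b^4 x^2 + a^6b^6c^4 x^3) / (b^6c^4 + 3a^2b^4 x + 3a^4b^2 x^2 + a^6c^4 x^3). Then the derivative of f at any x ≥ 0 equals 3a^2(b^4 − 1)·A(x) / [(b^2 + a^2 x)^2 (b^4c^4 + 3a^2b^2 x − a^2b^2c^4 x + a^4c^4 x^2)^2], where A(x) = b^4c^4 + 2a^2b^2c^4(1+b^4)x + a^4(3b^4 + c^8 + b^4c^8 + b^8c^8)x^2 + 2a^6b^2c^4(1+b^4)x^3 + a^8b^4c^4 x^4. -/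
/-- Explicit formula for the derivative of the Gibbs recursion function `f` at any `x ≥ 0`. -/
theorem f_hasDerivAt (a b c x : ℝ) (ha : 0 < a) (hb : 0 < b) (hc : 0 < c) (hx : 0 ≤ x) :
    HasDerivAt (fun x : ℝ =>
      (c^4 + 3*a^2*b^2*x + 3*a^4*b^4*x^2 + a^6*b^6*c^4*x^3) /
        (b^6*c^4 + 3*a^2*b^4*x + 3*a^4*b^2*x^2 + a^6*c^4*x^3))
      (3*a^2*(b^4 - 1) *
        (b^4*c^4 + 2*a^2*b^2*c^4*(1+b^4)*x + a^4*(3*b^4 + c^8 + b^4*c^8 + b^8*c^8)*x^2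
          + 2*a^6*b^2*c^4*(1+b^4)*x^3 + a^8*b^4*c^4*x^4) /
        ((b^2 + a^2*x)^2 * (b^4*c^4 + 3*a^2*b^2*x - a^2*b^2*c^4*x + a^4*c^4*x^2)^2))
      x := by
  have hD : 0 < b^6*c^4 + 3*a^2*b^4*x + 3*a^4*b^2*x^2 + a^6*c^4*x^3 := by
    have h1 : 0 < b^6*c^4 := by positivity
    have h2 : 0 ≤ 3*a^2*b^4*x := by positivity
    have h3 : 0 ≤ 3*a^4*b^2*x^2 := by positivity
    have h4 : 0 ≤ a^6*c^4*x^3 := by positivity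
    linarith
  have hP : 0 < b^2 + a^2*x := by positivity
  have hQ : 0 < b^4*c^4 + 3*a^2*b^2*x - a^2*b^2*c^4*x + a^4*c^4*x^2 := by
    have hfac : (b^2 + a^2*x) * (b^4*c^4 + 3*a^2*b^2*x - a^2*b^2*c^4*x + a^4*c^4*x^2)
        = b^6*c^4 + 3*a^2*b^4*x + 3*a^4*b^2*x^2 + a^6*c^4*x^3 := by ring
    nlinarith [hD, hP]
  have h1 : HasDerivAt (fun x : ℝ => x) 1 x := hasDerivAt_id x
  have h2 : HasDerivAt (fun x : ℝ => x^2) (2*x) x := by simpa using hasDerivAt_pow 2 x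
  have h3 : HasDerivAt (fun x : ℝ => x^3) (3*x^2) x := by
    simpa using hasDerivAt_pow 3 x
  have hnum : HasDerivAt (fun x : ℝ => c^4 + 3*a^2*b^2*x + 3*a^4*b^4*x^2 + a^6*b^6*c^4*x^3)
      (3*a^2*b^2*1 + 3*a^4*b^4*(2*x) + a^6*b^6*c^4*(3*x^2)) x := by
    have := (((hasDerivAt_const x (c^4)).add (h1.const_mul (3*a^2*b^2))).add
      (h2.const_mul (3*a^4*b^4))).add (h3.const_mul (a^6*b^6*c^4))
    simpa [mul_assoc, Pi.add_def] using this
  have hden : HasDerivAt (fun x : ℝ => b^6*c^4 + 3*a^2*b^4*x + 3*a^4*b^2*x^2 + a^6*c^4*x^3)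
      (3*a^2*b^4*1 + 3*a^4*b^2*(2*x) + a^6*c^4*(3*x^2)) x := by
    have := (((hasDerivAt_const x (b^6*c^4)).add (h1.const_mul (3*a^2*b^4))).add
      (h2.const_mul (3*a^4*b^2))).add (h3.const_mul (a^6*c^4))
    simpa [mul_assoc, Pi.add_def] using this
  have := hnum.div hden hD.ne'
  convert this using 1
  · rfl
  · rfl
  · rfl
  rw [div_eq_div_iff (mul_pos (pow_pos hP 2) (pow_pos hQ 2)).ne' (pow_pos hD 2).ne']
  ring
end

section
/- With F as in the previous context, if (v_1,v_4,v_5,v_8) satisfies v_1 = v_4 = v_5 = v_8 = √x for some x > 0, then the image (v_1',v_4',v_5',v_8') satisfies v_1' v_5' = v_4' v_8' = f(x), where f(x) = (c^4 + 3a^2b^2 x + 3a^4b^4 x^2 + a^6b^6c^4 x^3)/(b^6c^4 + 3a^2b^4 x + 3a^4b^2 x^2 + a^6c^4 x^3). -/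
/-- The Gibbs recursion operator `F` on `(ℝ_{>0})^4`. -/
noncomputable def Fop (a b c L : ℝ) (v : ℝ × ℝ × ℝ × ℝ) : ℝ × ℝ × ℝ × ℝ :=
  let v1 := v.1; let v4 := v.2.1; let v5 := v.2.2.1; let v8 := v.2.2.2
  ( L * ((a*b)^6*c^4*(v1*v4)^3 + 3*(a*b)^4*(v1*v4)^2 + 3*(a*b)^2*(v1*v4) + c^4) /
      ((a*b)^3*c*v4^3),
    (a*b)^3*c*v5^3 /
      (L * (b^6*c^4 + 3*a^2*b^4*(v5*v8) + 3*a^4*b^2*(v5*v8)^2 + c^4*a^6*(v5*v8)^3)),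
    (a*b)^3*c*v4^3 /
      (L * (a^6*c^4*(v1*v4)^3 + 3*a^4*b^2*(v1*v4)^2 + 3*a^2*b^4*(v1*v4) + b^6*c^4)),
    L * (c^4 + 3*(a*b)^2*(v5*v8) + 3*(a*b)^4*(v5*v8)^2 + (a*b)^6*c^4*(v5*v8)^3) /
      ((a*b)^3*c*v5^3) )

/-- On the diagonal `v₁ = v₄ = v₅ = v₈ = √x`, the image of `F` satisfies
`v₁'v₅' = v₄'v₈' = f(x)`. -/
theorem diag_reduces_to_f (a b c L x : ℝ) (ha : 0 < a) (hb : 0 < b) (hc : 0 < c)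
    (hL : 0 < L) (hx : 0 < x) :
    (Fop a b c L (Real.sqrt x, Real.sqrt x, Real.sqrt x, Real.sqrt x)).1 *
      (Fop a b c L (Real.sqrt x, Real.sqrt x, Real.sqrt x, Real.sqrt x)).2.2.1 =
      (c^4 + 3*a^2*b^2*x + 3*a^4*b^4*x^2 + a^6*b^6*c^4*x^3) /
        (b^6*c^4 + 3*a^2*b^4*x + 3*a^4*b^2*x^2 + a^6*c^4*x^3) ∧
    (Fop a b c L (Real.sqrt x, Real.sqrt x, Real.sqrt x, Real.sqrt x)).2.1 *
      (Fop a b c L (Real.sqrt x, Real.sqrt x, Real.sqrt x, Real.sqrt x)).2.2.2 =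
      (c^4 + 3*a^2*b^2*x + 3*a^4*b^4*x^2 + a^6*b^6*c^4*x^3) /
        (b^6*c^4 + 3*a^2*b^4*x + 3*a^4*b^2*x^2 + a^6*c^4*x^3) := by
  have hs : 0 < Real.sqrt x := Real.sqrt_pos.mpr hx
  have h2 : Real.sqrt x * Real.sqrt x = x := Real.mul_self_sqrt hx.le
  have hQ : 0 < b^6*c^4 + 3*a^2*b^4*x + 3*a^4*b^2*x^2 + a^6*c^4*x^3 := by positivity
  simp only [Fop]
  rw [mul_pow, h2] at *
  constructor
  · field_simp
    ring_nf
  · field_simp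
end

section
/- With F as above, the products satisfy: v_1' v_5' = [(ab)^6 c^4 (v_1v_4)^3 + 3(ab)^4(v_1v_4)^2 + 3(ab)^2(v_1v_4) + c^4] / [a^6c^4(v_1v_4)^3 + 3a^4b^2(v_1v_4)^2 + 3a^2b^4(v_1v_4) + b^6c^4] and v_4' v_8' = [c^4 + 3(ab)^2(v_5v_8) + 3(ab)^4(v_5v_8)^2 + (ab)^6c^4(v_5v_8)^3] / [b^6c^4 + 3a^2b^4(v_5v_8) + 3a^4b^2(v_5v_8)^2 + c^4a^6(v_5v_8)^3]. In particular, v_1'v_5' and v_4'v_8' depend only on the products v_1v_4 and v_5v_8 respectively, and the constant L cancels. -/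
/-- The products `v₁'v₅'` and `v₄'v₈'` depend only on `v₁v₄` resp. `v₅v₈`, and
the constant `L` cancels. -/
theorem products_formula (a b c L : ℝ) (ha : 0 < a) (hb : 0 < b) (hc : 0 < c)
    (hL : 0 < L) (v : ℝ × ℝ × ℝ × ℝ)
    (h1 : 0 < v.1) (h4 : 0 < v.2.1) (h5 : 0 < v.2.2.1) (h8 : 0 < v.2.2.2) :
    (Fop a b c L v).1 * (Fop a b c L v).2.2.1 =
      ((a*b)^6*c^4*(v.1*v.2.1)^3 + 3*(a*b)^4*(v.1*v.2.1)^2 + 3*(a*b)^2*(v.1*v.2.1) + c^4) /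
        (a^6*c^4*(v.1*v.2.1)^3 + 3*a^4*b^2*(v.1*v.2.1)^2 + 3*a^2*b^4*(v.1*v.2.1) + b^6*c^4) ∧
    (Fop a b c L v).2.1 * (Fop a b c L v).2.2.2 =
      (c^4 + 3*(a*b)^2*(v.2.2.1*v.2.2.2) + 3*(a*b)^4*(v.2.2.1*v.2.2.2)^2
          + (a*b)^6*c^4*(v.2.2.1*v.2.2.2)^3) /
        (b^6*c^4 + 3*a^2*b^4*(v.2.2.1*v.2.2.2) + 3*a^4*b^2*(v.2.2.1*v.2.2.2)^2
          + c^4*a^6*(v.2.2.1*v.2.2.2)^3) := by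
  obtain ⟨v1, v4, v5, v8⟩ := v
  simp only [Fop] at *
  have hD1 : (0:ℝ) < a^6*c^4*(v1*v4)^3 + 3*a^4*b^2*(v1*v4)^2 + 3*a^2*b^4*(v1*v4) + b^6*c^4 :=
    by positivity
  have hD2 : (0:ℝ) < b^6*c^4 + 3*a^2*b^4*(v5*v8) + 3*a^4*b^2*(v5*v8)^2 + c^4*a^6*(v5*v8)^3 :=
    by positivity
  constructor
  · rw [div_mul_div_comm]
    rw [div_eq_div_iff (by positivity) hD1.ne']
    ring
  · rw [div_mul_div_comm]
    rw [div_eq_div_iff (by positivity) (by positivity)]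
    ring
end

section
/- Let a,b,c > 0 with b^4 < 1 and define f as above. Then f maps the interval [b^6, b^{-6}] into itself, and the unique positive fixed point of f lies in [b^6, b^{-6}]. -/
private lemma fD_pos (a b c x : ℝ) (ha : 0 < a) (hb : 0 < b) (hc : 0 < c) (hx : 0 ≤ x) :
    0 < b^6*c^4 + 3*a^2*b^4*x + 3*a^4*b^2*x^2 + a^6*c^4*x^3 := by
  have h1 : 0 < b^6*c^4 := by positivity
  have h2 : 0 ≤ 3*a^2*b^4*x := by positivity
  have h3 : 0 ≤ 3*a^4*b^2*x^2 := by positivity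
  have h4 : 0 ≤ a^6*c^4*x^3 := by positivity
  linarith

/-- strict antitonicity cross inequality -/
private lemma f_cross (a b c x y : ℝ) (ha : 0 < a) (hb : 0 < b) (hc : 0 < c)
    (hb4 : b^4 < 1) (hx : 0 ≤ x) (hxy : x < y) :
    (c^4 + 3*a^2*b^2*y + 3*a^4*b^4*y^2 + a^6*b^6*c^4*y^3) *
      (b^6*c^4 + 3*a^2*b^4*x + 3*a^4*b^2*x^2 + a^6*c^4*x^3)
    < (c^4 + 3*a^2*b^2*x + 3*a^4*b^4*x^2 + a^6*b^6*c^4*x^3) *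
      (b^6*c^4 + 3*a^2*b^4*y + 3*a^4*b^2*y^2 + a^6*c^4*y^3) := by
  have hy : 0 < y := lt_of_le_of_lt hx hxy
  have h4 : 0 < 1 - b^4 := by linarith
  have h8 : 0 < 1 - b^8 := by nlinarith [pow_pos hb 4]
  have h12 : 0 < 1 - b^12 := by nlinarith [pow_pos hb 4, pow_pos hb 8]
  have hyx : 0 < y - x := by linarith
  have hyx2 : 0 ≤ y^2 - x^2 := by nlinarith
  have hyx3 : 0 ≤ y^3 - x^3 := by nlinarith
  have hxy0 : 0 ≤ x*y := mul_nonneg hx hy.le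
  have hid : (c^4 + 3*a^2*b^2*x + 3*a^4*b^4*x^2 + a^6*b^6*c^4*x^3) *
      (b^6*c^4 + 3*a^2*b^4*y + 3*a^4*b^2*y^2 + a^6*c^4*y^3)
    - (c^4 + 3*a^2*b^2*y + 3*a^4*b^4*y^2 + a^6*b^6*c^4*y^3) *
      (b^6*c^4 + 3*a^2*b^4*x + 3*a^4*b^2*x^2 + a^6*c^4*x^3)
    = 3*a^2*b^4*c^4*(1-b^4)*(y-x) + 3*a^4*b^2*c^4*(1-b^8)*(y^2-x^2)
      + a^6*c^8*(1-b^12)*(y^3-x^3) + 9*a^6*b^4*(1-b^4)*((x*y)*(y-x))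
      + 3*a^8*b^2*c^4*(1-b^8)*((x*y)*(y^2-x^2))
      + 3*a^10*b^4*c^4*(1-b^4)*((x*y)^2*(y-x)) := by ring
  have t1 : 0 < 3*a^2*b^4*c^4*(1-b^4)*(y-x) := by
    apply mul_pos (mul_pos (by positivity) h4) hyx
  have t2 : 0 ≤ 3*a^4*b^2*c^4*(1-b^8)*(y^2-x^2) :=
    mul_nonneg (mul_nonneg (by positivity) h8.le) hyx2
  have t3 : 0 ≤ a^6*c^8*(1-b^12)*(y^3-x^3) :=
    mul_nonneg (mul_nonneg (by positivity) h12.le) hyx3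
  have t4 : 0 ≤ 9*a^6*b^4*(1-b^4)*((x*y)*(y-x)) :=
    mul_nonneg (mul_nonneg (by positivity) h4.le) (mul_nonneg hxy0 hyx.le)
  have t5 : 0 ≤ 3*a^8*b^2*c^4*(1-b^8)*((x*y)*(y^2-x^2)) :=
    mul_nonneg (mul_nonneg (by positivity) h8.le) (mul_nonneg hxy0 hyx2)
  have t6 : 0 ≤ 3*a^10*b^4*c^4*(1-b^4)*((x*y)^2*(y-x)) :=
    mul_nonneg (mul_nonneg (by positivity) h4.le) (mul_nonneg (by positivity) hyx.le)
  linarith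

/-- lower bound: b^6 * D x < N x for x ≥ 0 -/
private lemma f_lower (a b c x : ℝ) (ha : 0 < a) (hb : 0 < b) (hc : 0 < c)
    (hb4 : b^4 < 1) (hx : 0 ≤ x) :
    b^6 * (b^6*c^4 + 3*a^2*b^4*x + 3*a^4*b^2*x^2 + a^6*c^4*x^3)
      < c^4 + 3*a^2*b^2*x + 3*a^4*b^4*x^2 + a^6*b^6*c^4*x^3 := by
  have h4 : 0 < 1 - b^4 := by linarith
  have h8 : 0 < 1 - b^8 := by nlinarith [pow_pos hb 4]
  have h12 : 0 < 1 - b^12 := by nlinarith [pow_pos hb 4, pow_pos hb 8]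
  have hid : (c^4 + 3*a^2*b^2*x + 3*a^4*b^4*x^2 + a^6*b^6*c^4*x^3)
      - b^6 * (b^6*c^4 + 3*a^2*b^4*x + 3*a^4*b^2*x^2 + a^6*c^4*x^3)
    = c^4*(1-b^12) + 3*a^2*b^2*(1-b^8)*x + 3*a^4*b^4*(1-b^4)*x^2 := by ring
  have t1 : 0 < c^4*(1-b^12) := mul_pos (by positivity) h12
  have t2 : 0 ≤ 3*a^2*b^2*(1-b^8)*x := mul_nonneg (mul_nonneg (by positivity) h8.le) hx
  have t3 : 0 ≤ 3*a^4*b^4*(1-b^4)*x^2 := mul_nonneg (mul_nonneg (by positivity) h4.le) (sq_nonneg x)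
  linarith

/-- upper bound: b^6 * N x ≤ D x for x ≥ 0 -/
private lemma f_upper (a b c x : ℝ) (ha : 0 < a) (hb : 0 < b) (hc : 0 < c)
    (hb4 : b^4 < 1) (hx : 0 ≤ x) :
    b^6 * (c^4 + 3*a^2*b^2*x + 3*a^4*b^4*x^2 + a^6*b^6*c^4*x^3)
      ≤ b^6*c^4 + 3*a^2*b^4*x + 3*a^4*b^2*x^2 + a^6*c^4*x^3 := by
  have h4 : 0 < 1 - b^4 := by linarith
  have h8 : 0 < 1 - b^8 := by nlinarith [pow_pos hb 4]
  have h12 : 0 < 1 - b^12 := by nlinarith [pow_pos hb 4, pow_pos hb 8]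
  have hid : (b^6*c^4 + 3*a^2*b^4*x + 3*a^4*b^2*x^2 + a^6*c^4*x^3)
      - b^6 * (c^4 + 3*a^2*b^2*x + 3*a^4*b^4*x^2 + a^6*b^6*c^4*x^3)
    = 3*a^2*b^4*(1-b^4)*x + 3*a^4*b^2*(1-b^8)*x^2 + a^6*c^4*(1-b^12)*x^3 := by ring
  have t1 : 0 ≤ 3*a^2*b^4*(1-b^4)*x := mul_nonneg (mul_nonneg (by positivity) h4.le) hx
  have t2 : 0 ≤ 3*a^4*b^2*(1-b^8)*x^2 := mul_nonneg (mul_nonneg (by positivity) h8.le) (sq_nonneg x)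
  have t3 : 0 ≤ a^6*c^4*(1-b^12)*x^3 :=
    mul_nonneg (mul_nonneg (by positivity) h12.le) (pow_nonneg hx 3)
  linarith

set_option maxHeartbeats 1000000 in
/-- If `b^4 < 1`, then `f` maps `[b⁶, b⁻⁶]` into itself and its unique positive
fixed point lies in `[b⁶, b⁻⁶]`. -/
theorem f_mapsTo_and_fixed_point_in_interval (a b c : ℝ)
    (ha : 0 < a) (hb : 0 < b) (hc : 0 < c) (hb4 : b^4 < 1) :
    Set.MapsTo (fun x : ℝ =>
      (c^4 + 3*a^2*b^2*x + 3*a^4*b^4*x^2 + a^6*b^6*c^4*x^3) /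
        (b^6*c^4 + 3*a^2*b^4*x + 3*a^4*b^2*x^2 + a^6*c^4*x^3))
      (Set.Icc (b^6) ((b^6)⁻¹)) (Set.Icc (b^6) ((b^6)⁻¹)) ∧
    (∃! x : ℝ, 0 < x ∧
      (c^4 + 3*a^2*b^2*x + 3*a^4*b^4*x^2 + a^6*b^6*c^4*x^3) /
        (b^6*c^4 + 3*a^2*b^4*x + 3*a^4*b^2*x^2 + a^6*c^4*x^3) = x) ∧
    (∀ x : ℝ, 0 < x →
      (c^4 + 3*a^2*b^2*x + 3*a^4*b^4*x^2 + a^6*b^6*c^4*x^3) /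
        (b^6*c^4 + 3*a^2*b^4*x + 3*a^4*b^2*x^2 + a^6*c^4*x^3) = x →
      x ∈ Set.Icc (b^6) ((b^6)⁻¹)) := by
  have hb6 : 0 < b^6 := by positivity
  -- f x ∈ Icc for any x ≥ 0
  have hmem : ∀ x : ℝ, 0 ≤ x →
      (c^4 + 3*a^2*b^2*x + 3*a^4*b^4*x^2 + a^6*b^6*c^4*x^3) /
        (b^6*c^4 + 3*a^2*b^4*x + 3*a^4*b^2*x^2 + a^6*c^4*x^3) ∈
        Set.Icc (b^6) ((b^6)⁻¹) := by
    intro x hx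
    have hD := fD_pos a b c x ha hb hc hx
    constructor
    · rw [le_div_iff₀ hD]
      exact (f_lower a b c x ha hb hc hb4 hx).le
    · rw [div_le_iff₀ hD, ← mul_le_mul_iff_right₀ hb6]
      calc b^6 * ((c^4 + 3*a^2*b^2*x + 3*a^4*b^4*x^2 + a^6*b^6*c^4*x^3))
          ≤ b^6*c^4 + 3*a^2*b^4*x + 3*a^4*b^2*x^2 + a^6*c^4*x^3 :=
            f_upper a b c x ha hb hc hb4 hx
        _ = b^6 * ((b^6)⁻¹ * (b^6*c^4 + 3*a^2*b^4*x + 3*a^4*b^2*x^2 + a^6*c^4*x^3)) := by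
            field_simp
  refine ⟨?_, ?_, ?_⟩
  · intro x hx
    exact hmem x (le_trans hb6.le hx.1)
  · -- existence and uniqueness of positive fixed point
    -- existence via IVT on g x = x * D x - N x
    set g : ℝ → ℝ := fun x =>
      x * (b^6*c^4 + 3*a^2*b^4*x + 3*a^4*b^2*x^2 + a^6*c^4*x^3)
        - (c^4 + 3*a^2*b^2*x + 3*a^4*b^4*x^2 + a^6*b^6*c^4*x^3) with hg
    have hg0 : g 0 < 0 := by simp [hg]; positivity
    have hT : 0 < (b^6)⁻¹ := by positivity
    have hgT : 0 ≤ g ((b^6)⁻¹) := by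
      have h := f_upper a b c ((b^6)⁻¹) ha hb hc hb4 hT.le
      have : (c^4 + 3*a^2*b^2*(b^6)⁻¹ + 3*a^4*b^4*((b^6)⁻¹)^2 + a^6*b^6*c^4*((b^6)⁻¹)^3)
          ≤ (b^6)⁻¹ * (b^6*c^4 + 3*a^2*b^4*(b^6)⁻¹ + 3*a^4*b^2*((b^6)⁻¹)^2
            + a^6*c^4*((b^6)⁻¹)^3) := by
        rw [← mul_le_mul_iff_right₀ hb6, ← mul_assoc, mul_inv_cancel₀ hb6.ne', one_mul]
        exact h
      simp only [hg]
      linarith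
    have hcont : ContinuousOn g (Set.Icc 0 ((b^6)⁻¹)) := by
      apply Continuous.continuousOn; fun_prop
    have hsub := intermediate_value_Icc hT.le hcont
    have h0mem : (0:ℝ) ∈ Set.Icc (g 0) (g ((b^6)⁻¹)) := ⟨hg0.le, hgT⟩
    obtain ⟨x₀, hx₀mem, hx₀⟩ := hsub h0mem
    have hx₀pos : 0 < x₀ := by
      rcases lt_or_eq_of_le hx₀mem.1 with h | h
      · exact h
      · exfalso; rw [← h] at hx₀; linarith
    have hDx₀ := fD_pos a b c x₀ ha hb hc hx₀pos.le
    -- uniqueness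
    have huniq : ∀ x y : ℝ, 0 < x → 0 < y →
        (c^4 + 3*a^2*b^2*x + 3*a^4*b^4*x^2 + a^6*b^6*c^4*x^3) /
          (b^6*c^4 + 3*a^2*b^4*x + 3*a^4*b^2*x^2 + a^6*c^4*x^3) = x →
        (c^4 + 3*a^2*b^2*y + 3*a^4*b^4*y^2 + a^6*b^6*c^4*y^3) /
          (b^6*c^4 + 3*a^2*b^4*y + 3*a^4*b^2*y^2 + a^6*c^4*y^3) = y →
        ¬ (x < y) := by
      intro x y hx hy hfx hfy hlt
      have hDx := fD_pos a b c x ha hb hc hx.le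
      have hDy := fD_pos a b c y ha hb hc hy.le
      rw [div_eq_iff hDx.ne'] at hfx
      rw [div_eq_iff hDy.ne'] at hfy
      have hcross := f_cross a b c x y ha hb hc hb4 hx.le hlt
      rw [hfx, hfy] at hcross
      have hDD : 0 < (b^6*c^4 + 3*a^2*b^4*x + 3*a^4*b^2*x^2 + a^6*c^4*x^3) *
          (b^6*c^4 + 3*a^2*b^4*y + 3*a^4*b^2*y^2 + a^6*c^4*y^3) := mul_pos hDx hDy
      have h2 : y * ((b^6*c^4 + 3*a^2*b^4*x + 3*a^4*b^2*x^2 + a^6*c^4*x^3) *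
          (b^6*c^4 + 3*a^2*b^4*y + 3*a^4*b^2*y^2 + a^6*c^4*y^3))
          < x * ((b^6*c^4 + 3*a^2*b^4*x + 3*a^4*b^2*x^2 + a^6*c^4*x^3) *
          (b^6*c^4 + 3*a^2*b^4*y + 3*a^4*b^2*y^2 + a^6*c^4*y^3)) := by nlinarith [hcross]
      have h3 := lt_of_mul_lt_mul_right h2 hDD.le
      linarith
    refine ⟨x₀, ⟨hx₀pos, ?_⟩, ?_⟩
    · rw [div_eq_iff hDx₀.ne']
      simp only [hg] at hx₀
      linarith
    · rintro y ⟨hy, hfy⟩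
      have hfx₀ : (c^4 + 3*a^2*b^2*x₀ + 3*a^4*b^4*x₀^2 + a^6*b^6*c^4*x₀^3) /
          (b^6*c^4 + 3*a^2*b^4*x₀ + 3*a^4*b^2*x₀^2 + a^6*c^4*x₀^3) = x₀ := by
        rw [div_eq_iff hDx₀.ne']
        simp only [hg] at hx₀
        linarith
      rcases lt_trichotomy y x₀ with h | h | h
      · exact absurd h (huniq y x₀ hy hx₀pos hfy hfx₀)
      · exact h
      · exact absurd h (huniq x₀ y hx₀pos hy hfx₀ hfy)
  · intro x hx hfx
    rw [← hfx]
    exact hmem x hx.le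
end
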